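/- arXiv:2512.11238 — 2 statements merged into one kernel-verified Lean document; each statement's English description precedes it below -/
import Mathlib

section
/- Let α ∈ ℝ and let β > 0 be not an integer. In ℝ[[X,Y]] set B_0 = Σ_{m=0}^∞ (−αβ)^m X^m/(m!·(1−β)_m), B_1 = Σ_{m=0}^∞ (−αβ)^m X^m/(m!·(1+β)_m), A_0 = (X/β)·B_0′ and A_1 = (X/β)·B_1′ + B_1 (formal derivatives in X). The series B_0 + Y·B_1 has constant coefficient 1 and is invertible in ℝ[[X,Y]], and the formal power series f := (A_0 + Y·A_1)·(B_0 + Y·B_1)^{−1} satisfies X·∂f/∂X + β·Y·∂f/∂Y − β·f + β·f² + α·X = 0 in ℝ[[X,Y]]. (This is an explicit bivariate rational solution realizing the paper's form (riccrat): substituting Y = x^β gives a solution of the Riccati equation written as a ratio with numerator and denominator each linear in x^β.) -/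
/-- The Euler-type operator `X·∂/∂X + β·Y·∂/∂Y` on bivariate formal power series
(variable `0` is `X`, variable `1` is `Y`), defined coefficientwise. -/
noncomputable def eulerOp (β : ℝ) (f : MvPowerSeries (Fin 2) ℝ) : MvPowerSeries (Fin 2) ℝ :=
  fun d => (((d 0 : ℕ) : ℝ) + β * ((d 1 : ℕ) : ℝ)) * MvPowerSeries.coeff d f

/-- Embedding of a univariate formal power series into `ℝ[[X,Y]]` as a series in the
first variable `X` only. -/
noncomputable def embX (p : PowerSeries ℝ) : MvPowerSeries (Fin 2) ℝ :=
  fun d => if d 1 = 0 then PowerSeries.coeff (d 0) p else 0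

/-- `B₀ = ∑_m (-αβ)^m X^m / (m! (1-β)_m)` as a univariate series. -/
noncomputable def riccB0 (α β : ℝ) : PowerSeries ℝ :=
  PowerSeries.mk fun m : ℕ =>
    (-(α * β)) ^ m / ((m.factorial : ℝ) * (ascPochhammer ℝ m).eval (1 - β))

/-- `B₁ = ∑_m (-αβ)^m X^m / (m! (1+β)_m)` as a univariate series. -/
noncomputable def riccB1 (α β : ℝ) : PowerSeries ℝ :=
  PowerSeries.mk fun m : ℕ =>
    (-(α * β)) ^ m / ((m.factorial : ℝ) * (ascPochhammer ℝ m).eval (1 + β))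

/-- `A₀ = (X/β)·B₀′` (formal derivative in `X`). -/
noncomputable def riccA0 (α β : ℝ) : PowerSeries ℝ :=
  PowerSeries.C β⁻¹ * PowerSeries.X * PowerSeries.derivative ℝ (riccB0 α β)

/-- `A₁ = (X/β)·B₁′ + B₁` (formal derivative in `X`). -/
noncomputable def riccA1 (α β : ℝ) : PowerSeries ℝ :=
  PowerSeries.C β⁻¹ * PowerSeries.X * PowerSeries.derivative ℝ (riccB1 α β) + riccB1 α β

/-- The denominator `B₀ + Y·B₁` in `ℝ[[X,Y]]`. -/
noncomputable def riccDen (α β : ℝ) : MvPowerSeries (Fin 2) ℝ :=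
  embX (riccB0 α β) + MvPowerSeries.X 1 * embX (riccB1 α β)

/-- The rational solution `f = (A₀ + Y·A₁)·(B₀ + Y·B₁)⁻¹` in `ℝ[[X,Y]]`. -/
noncomputable def riccF (α β : ℝ) : MvPowerSeries (Fin 2) ℝ :=
  (embX (riccA0 α β) + MvPowerSeries.X 1 * embX (riccA1 α β)) * (riccDen α β)⁻¹

section RiccAux

open MvPowerSeries

theorem euler_coeff (β : ℝ) (f : MvPowerSeries (Fin 2) ℝ) (d : Fin 2 →₀ ℕ) :
    MvPowerSeries.coeff d (eulerOp β f)
      = (((d 0 : ℕ) : ℝ) + β * ((d 1 : ℕ) : ℝ)) * MvPowerSeries.coeff d f := rfl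

theorem euler_mul (β : ℝ) (f g : MvPowerSeries (Fin 2) ℝ) :
    eulerOp β (f * g) = eulerOp β f * g + f * eulerOp β g := by
  ext d
  rw [map_add, euler_coeff, MvPowerSeries.coeff_mul, MvPowerSeries.coeff_mul,
    MvPowerSeries.coeff_mul, Finset.mul_sum, ← Finset.sum_add_distrib]
  refine Finset.sum_congr rfl fun p hp => ?_
  rw [Finset.HasAntidiagonal.mem_antidiagonal] at hp
  rw [euler_coeff, euler_coeff]
  have h0 : d 0 = p.1 0 + p.2 0 := by rw [← hp]; simp [Finsupp.add_apply]
  have h1 : d 1 = p.1 1 + p.2 1 := by rw [← hp]; simp [Finsupp.add_apply]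
  rw [h0, h1]
  push_cast
  ring

theorem euler_C_mul (β c : ℝ) (f : MvPowerSeries (Fin 2) ℝ) :
    eulerOp β (MvPowerSeries.C c * f) = MvPowerSeries.C c * eulerOp β f := by
  ext d
  rw [euler_coeff, MvPowerSeries.coeff_C_mul, MvPowerSeries.coeff_C_mul, euler_coeff]
  ring

theorem euler_one (β : ℝ) : eulerOp β (1 : MvPowerSeries (Fin 2) ℝ) = 0 := by
  ext d
  rw [euler_coeff, MvPowerSeries.coeff_one, (MvPowerSeries.coeff d).map_zero]
  by_cases hd : d = 0
  · simp [hd]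
  · simp [hd]

/-- coefficient of `B₀`. -/
noncomputable def b0c (α β : ℝ) (m : ℕ) : ℝ :=
  (-(α * β)) ^ m / ((m.factorial : ℝ) * (ascPochhammer ℝ m).eval (1 - β))

/-- coefficient of `B₁`. -/
noncomputable def b1c (α β : ℝ) (m : ℕ) : ℝ :=
  (-(α * β)) ^ m / ((m.factorial : ℝ) * (ascPochhammer ℝ m).eval (1 + β))

theorem coeff_riccB0 (α β : ℝ) (m : ℕ) :
    PowerSeries.coeff m (riccB0 α β) = b0c α β m := PowerSeries.coeff_mk _ _

theorem coeff_riccB1 (α β : ℝ) (m : ℕ) :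
    PowerSeries.coeff m (riccB1 α β) = b1c α β m := PowerSeries.coeff_mk _ _

theorem coeff_embX (p : PowerSeries ℝ) (d : Fin 2 →₀ ℕ) :
    MvPowerSeries.coeff d (embX p)
      = if d 1 = 0 then PowerSeries.coeff (d 0) p else 0 := rfl

theorem coeff_X1_mul_embX (p : PowerSeries ℝ) (d : Fin 2 →₀ ℕ) :
    MvPowerSeries.coeff d (MvPowerSeries.X 1 * embX p)
      = if d 1 = 1 then PowerSeries.coeff (d 0) p else 0 := by
  rw [MvPowerSeries.X_def, MvPowerSeries.coeff_monomial_mul]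
  by_cases h : Finsupp.single (1 : Fin 2) 1 ≤ d
  · rw [if_pos h, one_mul, coeff_embX]
    have h1 : 1 ≤ d 1 := Finsupp.single_le_iff.mp h
    have hsub1 : ((d - Finsupp.single (1 : Fin 2) 1 : Fin 2 →₀ ℕ)) 1 = d 1 - 1 := by
      simp [Finsupp.tsub_apply]
    have hsub0 : ((d - Finsupp.single (1 : Fin 2) 1 : Fin 2 →₀ ℕ)) 0 = d 0 := by
      simp [Finsupp.tsub_apply, Finsupp.single_apply]
    rw [hsub1, hsub0]
    by_cases h2 : d 1 = 1
    · rw [if_pos (by omega), if_pos h2]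
    · rw [if_neg (by omega), if_neg h2]
  · rw [if_neg h]
    have h1 : d 1 = 0 := by
      by_contra hc
      exact h (Finsupp.single_le_iff.mpr (by omega))
    rw [if_neg (by omega)]

theorem coeff_X0_mul (f : MvPowerSeries (Fin 2) ℝ) (d : Fin 2 →₀ ℕ) :
    MvPowerSeries.coeff d (MvPowerSeries.X 0 * f)
      = if 1 ≤ d 0 then MvPowerSeries.coeff (d - Finsupp.single 0 1) f else 0 := by
  rw [MvPowerSeries.X_def, MvPowerSeries.coeff_monomial_mul]
  by_cases h : Finsupp.single (0 : Fin 2) 1 ≤ d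
  · rw [if_pos h, one_mul, if_pos (Finsupp.single_le_iff.mp h)]
  · rw [if_neg h, if_neg (fun hc => h (Finsupp.single_le_iff.mpr hc))]

theorem coeff_riccDen (α β : ℝ) (d : Fin 2 →₀ ℕ) :
    MvPowerSeries.coeff d (riccDen α β)
      = (if d 1 = 0 then b0c α β (d 0) else 0) + (if d 1 = 1 then b1c α β (d 0) else 0) := by
  rw [riccDen, map_add, coeff_embX, coeff_X1_mul_embX, coeff_riccB0, coeff_riccB1]

theorem coeff_X0_mul_riccDen (α β : ℝ) (d : Fin 2 →₀ ℕ) :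
    MvPowerSeries.coeff d (MvPowerSeries.X 0 * riccDen α β)
      = if 1 ≤ d 0 then ((if d 1 = 0 then b0c α β (d 0 - 1) else 0)
          + (if d 1 = 1 then b1c α β (d 0 - 1) else 0)) else 0 := by
  rw [coeff_X0_mul]
  by_cases h : 1 ≤ d 0
  · rw [if_pos h, if_pos h, coeff_riccDen]
    have hsub1 : ((d - Finsupp.single (0 : Fin 2) 1 : Fin 2 →₀ ℕ)) 1 = d 1 := by
      simp [Finsupp.tsub_apply, Finsupp.single_apply]
    have hsub0 : ((d - Finsupp.single (0 : Fin 2) 1 : Fin 2 →₀ ℕ)) 0 = d 0 - 1 := by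
      simp [Finsupp.tsub_apply]
    rw [hsub1, hsub0]
  · rw [if_neg h, if_neg h]

theorem coeff_riccA0 (α β : ℝ) (m : ℕ) :
    PowerSeries.coeff m (riccA0 α β) = β⁻¹ * (m : ℝ) * b0c α β m := by
  rw [riccA0, mul_assoc, PowerSeries.coeff_C_mul]
  cases m with
  | zero =>
    simp
  | succ n =>
    rw [PowerSeries.coeff_succ_X_mul, PowerSeries.coeff_derivative, coeff_riccB0]
    push_cast; ring

theorem coeff_riccA1 (α β : ℝ) (m : ℕ) :
    PowerSeries.coeff m (riccA1 α β) = β⁻¹ * (m : ℝ) * b1c α β m + b1c α β m := by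
  rw [riccA1, map_add, mul_assoc, PowerSeries.coeff_C_mul, coeff_riccB1]
  cases m with
  | zero =>
    simp
  | succ n =>
    rw [PowerSeries.coeff_succ_X_mul, PowerSeries.coeff_derivative, coeff_riccB1]
    push_cast; ring

theorem poch0_ne (β : ℝ) (hβ : ∀ k : ℤ, β ≠ (k : ℝ)) (m : ℕ) :
    (ascPochhammer ℝ m).eval (1 - β) ≠ 0 := by
  induction m with
  | zero => simp [ascPochhammer_zero]
  | succ n ih =>
    rw [ascPochhammer_succ_eval]
    refine mul_ne_zero ih fun h => ?_
    exact hβ ((n : ℤ) + 1) (by push_cast; linarith)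

theorem poch1_pos (β : ℝ) (hβpos : 0 < β) (m : ℕ) :
    0 < (ascPochhammer ℝ m).eval (1 + β) := by
  induction m with
  | zero => simp [ascPochhammer_zero]
  | succ n ih =>
    rw [ascPochhammer_succ_eval]
    have hn : (0 : ℝ) ≤ n := Nat.cast_nonneg n
    exact mul_pos ih (by linarith)

theorem b0_rec (α β : ℝ) (hβ : ∀ k : ℤ, β ≠ (k : ℝ)) (m : ℕ) :
    ((m : ℝ) + 1) * (((m : ℝ) + 1) - β) * b0c α β (m + 1) = -(α * β) * b0c α β m := by
  have h1 := poch0_ne β hβ m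
  have h2 : ((m.factorial : ℕ) : ℝ) ≠ 0 := Nat.cast_ne_zero.mpr m.factorial_ne_zero
  have h3 : (1 - β + (m : ℝ)) ≠ 0 := fun h => hβ ((m : ℤ) + 1) (by push_cast; linarith)
  have h4 : ((m : ℝ) + 1) ≠ 0 := by positivity
  rw [b0c, b0c, ascPochhammer_succ_eval, Nat.factorial_succ]
  push_cast
  field_simp
  ring

theorem b1_rec (α β : ℝ) (hβpos : 0 < β) (m : ℕ) :
    ((m : ℝ) + 1) * (((m : ℝ) + 1) + β) * b1c α β (m + 1) = -(α * β) * b1c α β m := by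
  have h1 := ne_of_gt (poch1_pos β hβpos m)
  have h2 : ((m.factorial : ℕ) : ℝ) ≠ 0 := Nat.cast_ne_zero.mpr m.factorial_ne_zero
  have hn : (0 : ℝ) ≤ m := Nat.cast_nonneg m
  have h3 : (1 + β + (m : ℝ)) ≠ 0 := by linarith
  have h4 : ((m : ℝ) + 1) ≠ 0 := by positivity
  rw [b1c, b1c, ascPochhammer_succ_eval, Nat.factorial_succ]
  push_cast
  field_simp
  ring

end RiccAux

/-- **Explicit bivariate rational solution of the Riccati equation** (the paper's form
(riccrat)): `B₀ + Y·B₁` has constant coefficient `1`, hence is invertible, and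
`f = (A₀ + Y·A₁)·(B₀ + Y·B₁)⁻¹` satisfies
`X ∂f/∂X + β Y ∂f/∂Y - β f + β f² + α X = 0` in `ℝ[[X,Y]]`. -/
theorem riccati_explicit_rational_solution (α β : ℝ) (hβpos : 0 < β)
    (hβ : ∀ k : ℤ, β ≠ (k : ℝ)) :
    MvPowerSeries.constantCoeff (riccDen α β) = 1 ∧
    IsUnit (riccDen α β) ∧
    eulerOp β (riccF α β) - MvPowerSeries.C β * riccF α β
      + MvPowerSeries.C β * (riccF α β) ^ 2
      + MvPowerSeries.C α * MvPowerSeries.X 0 = 0 := by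
  have hβ0 : β ≠ 0 := ne_of_gt hβpos
  have hc : MvPowerSeries.constantCoeff (riccDen α β) = 1 := by
    rw [← MvPowerSeries.coeff_zero_eq_constantCoeff_apply, coeff_riccDen]
    simp [b0c, ascPochhammer_zero]
  refine ⟨hc, MvPowerSeries.isUnit_iff_constantCoeff.mpr (by rw [hc]; exact isUnit_one), ?_⟩
  set N : MvPowerSeries (Fin 2) ℝ :=
    embX (riccA0 α β) + MvPowerSeries.X 1 * embX (riccA1 α β) with hN
  set D : MvPowerSeries (Fin 2) ℝ := riccDen α β with hD
  set I : MvPowerSeries (Fin 2) ℝ := (riccDen α β)⁻¹ with hI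
  have hF : riccF α β = N * I := rfl
  have hinv : D * I = 1 :=
    MvPowerSeries.mul_inv_cancel _ (by rw [hc]; exact one_ne_zero)
  have hCβN : MvPowerSeries.C β * N = eulerOp β D := by
    ext d
    rw [hN, hD, MvPowerSeries.coeff_C_mul, euler_coeff, coeff_riccDen, map_add, coeff_embX,
      coeff_X1_mul_embX, coeff_riccA0, coeff_riccA1]
    by_cases h1 : d 1 = 0
    · rw [if_pos h1, if_pos h1, if_neg (by omega), if_neg (by omega), h1]
      push_cast
      field_simp
      ring
    · by_cases h2 : d 1 = 1
      · rw [if_neg h1, if_neg h1, if_pos h2, if_pos h2, h2]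
        push_cast
        field_simp
        ring
      · rw [if_neg h1, if_neg h1, if_neg h2, if_neg h2]
        ring
  have hKEY : eulerOp β (eulerOp β D) = MvPowerSeries.C β * eulerOp β D
      - MvPowerSeries.C (α * β) * (MvPowerSeries.X 0 * D) := by
    ext d
    simp only [hD, euler_coeff, map_sub, MvPowerSeries.coeff_C_mul, coeff_X0_mul_riccDen,
      coeff_riccDen]
    by_cases h1 : d 1 = 0
    · rcases Nat.eq_zero_or_pos (d 0) with hm | hm
      · simp [h1, hm]
      · obtain ⟨k, hk⟩ : ∃ k, d 0 = k + 1 := ⟨d 0 - 1, by omega⟩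
        rw [hk, h1]
        simp only [Nat.add_sub_cancel, if_pos (by omega : 1 ≤ k + 1),
          if_pos rfl, if_neg (by omega : ¬(0 = 1))]
        push_cast
        linear_combination b0_rec α β hβ k
    · by_cases h2 : d 1 = 1
      · rcases Nat.eq_zero_or_pos (d 0) with hm | hm
        · rw [hm, h2]
          simp only [if_neg (by omega : ¬(1 = 0)), if_pos rfl, if_neg (by omega : ¬(1 ≤ 0))]
          push_cast
          ring
        · obtain ⟨k, hk⟩ : ∃ k, d 0 = k + 1 := ⟨d 0 - 1, by omega⟩
          rw [hk, h2]
          simp only [Nat.add_sub_cancel, if_pos (by omega : 1 ≤ k + 1),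
            if_pos rfl, if_neg (by omega : ¬(1 = 0))]
          push_cast
          linear_combination b1_rec α β hβpos k
      · simp only [if_neg h1, if_neg h2]
        ring_nf
        simp
  have h7 : eulerOp β D * I + D * eulerOp β I = 0 := by
    have h := euler_mul β D I
    rw [hinv, euler_one] at h
    exact h.symm
  have hEI : eulerOp β I = -(eulerOp β D * I * I) := by
    linear_combination I * h7 - eulerOp β I * hinv
  have h6 : MvPowerSeries.C β * eulerOp β N
      = MvPowerSeries.C β * eulerOp β D
        - MvPowerSeries.C α * MvPowerSeries.C β * (MvPowerSeries.X 0 * D) := by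
    have h := congrArg (eulerOp β) hCβN
    rw [euler_C_mul] at h
    rw [h, hKEY, map_mul]
  have hmain : MvPowerSeries.C β *
      (eulerOp β (riccF α β) - MvPowerSeries.C β * riccF α β
        + MvPowerSeries.C β * (riccF α β) ^ 2
        + MvPowerSeries.C α * MvPowerSeries.X 0) = 0 := by
    rw [hF, euler_mul, hEI]
    linear_combination I * h6
      + (MvPowerSeries.C β * N * I * I - MvPowerSeries.C β * I) * hCβN
      - (MvPowerSeries.C α * MvPowerSeries.C β * MvPowerSeries.X 0) * hinv
  calc eulerOp β (riccF α β) - MvPowerSeries.C β * riccF α β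
      + MvPowerSeries.C β * (riccF α β) ^ 2
      + MvPowerSeries.C α * MvPowerSeries.X 0
      = MvPowerSeries.C β⁻¹ * (MvPowerSeries.C β *
        (eulerOp β (riccF α β) - MvPowerSeries.C β * riccF α β
          + MvPowerSeries.C β * (riccF α β) ^ 2
          + MvPowerSeries.C α * MvPowerSeries.X 0)) := by
        rw [← mul_assoc, ← map_mul, inv_mul_cancel₀ hβ0, map_one, one_mul]
    _ = 0 := by rw [hmain, mul_zero]
end

section
/- Let α, β ∈ ℝ with α ≠ 0 and β not an integer. Define the Riccati series coefficients c_k ∈ ℝ by c_0 = 0 and, for k ≥ 1, (k − β)·c_k + β·Σ_{i=1}^{k−1} c_i·c_{k−i} + α·δ_{k,1} = 0 (well defined since β is not a positive integer; in particular c_1 = α/(β−1) ≠ 0 and c_2 = −β c_1²/(2−β)). For n ≥ 2 define α_n = −α²β²/((β−2n+1)(β−2n+2)²(β−2n+3)) and β_n = −2αβ/((β−2n)(β−2n+2)), and define polynomials recursively by A_0 = 0, B_0 = 1, A_1 = c_1·x, B_1 = 1 − (c_2/c_1)·x, A_n = (1+β_n x)·A_{n−1} + α_n x²·A_{n−2},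 B_n = (1+β_n x)·B_{n−1} + α_n x²·B_{n−2}. Then for every n ≥ 1 the pair (A_n, B_n) is an [n/n] Padé pair for the series (c_k), i.e. A_n − B_n·C_{2n} has zero coefficients in all degrees 0,…,2n. (These are the paper's explicit Jacobi parameters for the Riccati equation, Algorithm 2.) -/
open Polynomial

/-- The truncation `C_N(x) = ∑_{k=0}^{N} c_k x^k` of the series with coefficients `c`. -/
noncomputable def seriesTrunc (c : ℕ → ℝ) (N : ℕ) : Polynomial ℝ :=
  ∑ k ∈ Finset.range (N + 1), Polynomial.C (c k) * Polynomial.X ^ k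

/-- `(A, B)` is an `[n/n]` Padé pair for the series with coefficients `c`. -/
def IsPadePair (c : ℕ → ℝ) (n : ℕ) (A B : Polynomial ℝ) : Prop :=
  A.natDegree ≤ n ∧ B.natDegree ≤ n ∧ A.coeff 0 = 0 ∧ B.coeff 0 = 1 ∧
    ∀ j ≤ 2 * n, (A - B * seriesTrunc c (2 * n)).coeff j = 0

/-- The explicit Jacobi parameter `α_n = -α²β²/((β-2n+1)(β-2n+2)²(β-2n+3))` for the
Riccati series. -/
noncomputable def riccatiαn (α β : ℝ) (n : ℕ) : ℝ :=
  -(α ^ 2 * β ^ 2) /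
    ((β - 2 * n + 1) * (β - 2 * n + 2) ^ 2 * (β - 2 * n + 3))

/-- The explicit Jacobi parameter `β_n = -2αβ/((β-2n)(β-2n+2))` for the Riccati series. -/
noncomputable def riccatiβn (α β : ℝ) (n : ℕ) : ℝ :=
  -(2 * α * β) / ((β - 2 * n) * (β - 2 * n + 2))


namespace RiccatiProof

open PowerSeries

noncomputable def pk (β : ℝ) (m j : ℕ) : ℝ := ∏ i ∈ Finset.range j, ((m : ℝ) + 1 - β + i)

noncomputable def gc (α β : ℝ) (m j : ℕ) : ℝ := (-(α * β)) ^ j / (j.factorial * pk β m j)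

noncomputable def G (α β : ℝ) (m : ℕ) : PowerSeries ℝ := PowerSeries.mk (gc α β m)

noncomputable def aS (α β : ℝ) (m : ℕ) : ℝ := -(α * β) / (((m : ℝ) - β) * ((m : ℝ) + 1 - β))

noncomputable def dco (β : ℝ) (α : ℝ) (m : ℕ) : ℝ := -(α * β) / ((m : ℝ) + 1 - β)

noncomputable def Wser (α β : ℝ) : PowerSeries ℝ :=
  PowerSeries.C (α / (β - 1)) * (PowerSeries.X * G α β 1) * (G α β 0)⁻¹

noncomputable def sig (α β : ℝ) : ℕ → ℝ
  | 0 => α / (β - 1)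
  | m + 1 => sig α β m * aS α β (2 * m + 1) * aS α β (2 * m + 2)

variable {α β : ℝ}

lemma sub_ne (hβ : ∀ k : ℤ, β ≠ (k : ℝ)) (x : ℝ) (k : ℤ) (hx : x = k) : x - β ≠ 0 := by
  intro h
  exact hβ k (by linarith [hx ▸ h])

lemma pk_zero (m : ℕ) : pk β m 0 = 1 := by simp [pk]

lemma pk_succ (m j : ℕ) : pk β m (j + 1) = pk β m j * ((m : ℝ) + 1 - β + j) :=
  Finset.prod_range_succ _ _

lemma pk_shift (m j : ℕ) : pk β m (j + 1) = ((m : ℝ) + 1 - β) * pk β (m + 1) j := by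
  rw [pk, Finset.prod_range_succ']
  simp only [Nat.cast_zero, add_zero]
  rw [mul_comm]
  congr 1
  refine Finset.prod_congr rfl fun i _ => ?_
  push_cast; ring

lemma pk_ne_zero (hβ : ∀ k : ℤ, β ≠ (k : ℝ)) (m j : ℕ) : pk β m j ≠ 0 := by
  refine Finset.prod_ne_zero_iff.2 fun i _ => ?_
  have : ((m : ℝ) + 1 + i) - β ≠ 0 := sub_ne hβ _ ((m : ℤ) + 1 + i) (by push_cast; ring)
  intro h; apply this; linarith

lemma gc_zero (m : ℕ) : gc α β m 0 = 1 := by simp [gc, pk_zero]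

lemma constantCoeff_G (m : ℕ) : PowerSeries.constantCoeff (G α β m) = 1 := by
  simpa [G] using gc_zero (α := α) (β := β) (m := m)

lemma gc_contig (hβ : ∀ k : ℤ, β ≠ (k : ℝ)) (m j : ℕ) :
    gc α β m (j + 1) = gc α β (m + 1) (j + 1) + aS α β (m + 1) * gc α β (m + 2) j := by
  have h1 : pk β m (j + 1) = ((m : ℝ) + 1 - β) * pk β (m + 1) j := pk_shift m j
  have h2 : pk β (m + 1) (j + 1) = pk β (m + 1) j * ((m : ℝ) + 1 + 1 - β + j) := by
    rw [pk_succ]; push_cast; ring_nf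
  have h3 : pk β (m + 1) (j + 1) = ((m : ℝ) + 2 - β) * pk β (m + 2) j := by
    rw [pk_shift]; push_cast; ring_nf
  have hm1 : ((m : ℝ) + 1 - β) ≠ 0 := by
    have := sub_ne hβ ((m : ℝ) + 1) ((m : ℤ) + 1) (by push_cast; ring); simpa using this
  have hm2 : ((m : ℝ) + 2 - β) ≠ 0 := by
    have := sub_ne hβ ((m : ℝ) + 2) ((m : ℤ) + 2) (by push_cast; ring); simpa using this
  have hmj : ((m : ℝ) + 1 + 1 - β + j) ≠ 0 := by
    have := sub_ne hβ ((m : ℝ) + 2 + j) ((m : ℤ) + 2 + j) (by push_cast; ring)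
    intro h; apply this; linarith
  have hq : pk β (m + 1) j ≠ 0 := pk_ne_zero hβ _ _
  have hr : pk β (m + 2) j ≠ 0 := pk_ne_zero hβ _ _
  have hfac : (j.factorial : ℝ) ≠ 0 := Nat.cast_ne_zero.2 j.factorial_ne_zero
  have haS : aS α β (m + 1) = -(α * β) / ((((m : ℝ) + 1) - β) * (((m : ℝ) + 2) - β)) := by
    simp only [aS]; push_cast; ring_nf
  have hrel : pk β (m + 2) j = pk β (m + 1) j * ((m : ℝ) + 1 + 1 - β + j) / ((m : ℝ) + 2 - β) := by
    rw [eq_div_iff hm2, ← h2, h3]; ring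
  rw [gc, gc, gc, h1, h2, haS, hrel, Nat.factorial_succ]
  push_cast
  field_simp
  ring

/-- contiguous relation at power series level -/
lemma G_contig (hβ : ∀ k : ℤ, β ≠ (k : ℝ)) (m : ℕ) :
    G α β m = G α β (m + 1) + PowerSeries.C (aS α β (m + 1)) * (PowerSeries.X * G α β (m + 2)) := by
  ext j
  rcases j with _ | j
  · simp only [PowerSeries.coeff_zero_eq_constantCoeff, map_add, map_mul,
      PowerSeries.constantCoeff_C, PowerSeries.constantCoeff_X, zero_mul, mul_zero, add_zero, G,
      PowerSeries.constantCoeff_mk]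
    rw [gc_zero, gc_zero]
  · simp only [map_add, PowerSeries.coeff_C_mul, PowerSeries.coeff_succ_X_mul, G,
      PowerSeries.coeff_mk]
    exact gc_contig hβ m j

/-- derivative of G m -/
lemma G_deriv (hβ : ∀ k : ℤ, β ≠ (k : ℝ)) (m : ℕ) :
    d⁄dX ℝ (G α β m) = PowerSeries.C (dco β α m) * G α β (m + 1) := by
  ext j
  rw [PowerSeries.coeff_derivative]
  simp only [PowerSeries.coeff_C_mul, G, PowerSeries.coeff_mk]
  have hm1 : ((m : ℝ) + 1 - β) ≠ 0 := by
    have := sub_ne hβ ((m : ℝ) + 1) ((m : ℤ) + 1) (by push_cast; ring); simpa using this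
  have hq : pk β (m + 1) j ≠ 0 := pk_ne_zero hβ _ _
  have hfac : (j.factorial : ℝ) ≠ 0 := Nat.cast_ne_zero.2 j.factorial_ne_zero
  rw [gc, gc, pk_shift, Nat.factorial_succ, dco]
  push_cast
  field_simp
  ring


lemma beta_sub_ne (hβ : ∀ k : ℤ, β ≠ (k : ℝ)) (k : ℤ) : β - (k : ℝ) ≠ 0 := by
  intro h; exact hβ k (by linarith)

lemma G_ne_zero (m : ℕ) : G α β m ≠ 0 := fun h => by
  have := constantCoeff_G (α := α) (β := β) (m := m); rw [h] at this; simp at this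

lemma Wu_eq (hβ : ∀ k : ℤ, β ≠ (k : ℝ)) :
    Wser α β * G α β 0 = PowerSeries.C (α / (β - 1)) * (PowerSeries.X * G α β 1) := by
  rw [Wser, mul_assoc, PowerSeries.inv_mul_cancel _ (by rw [constantCoeff_G]; norm_num),
    mul_one]

lemma W_riccati (hβ : ∀ k : ℤ, β ≠ (k : ℝ)) :
    PowerSeries.X * d⁄dX ℝ (Wser α β) - PowerSeries.C β * Wser α β
      + PowerSeries.C β * (Wser α β) ^ 2 + PowerSeries.C α * PowerSeries.X = 0 := by
  set u := G α β 0 with hu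
  set W := Wser α β with hW
  have hb1 : β - 1 ≠ 0 := by have := beta_sub_ne hβ 1; push_cast at this; exact this
  have h1b : 1 - β ≠ 0 := fun h => hb1 (by linarith)
  have hb0 : β ≠ 0 := fun h => hβ 0 (by simp [h])
  -- h2 : C β * W * u = X * u'
  have h2 : PowerSeries.C β * W * u = PowerSeries.X * d⁄dX ℝ u := by
    rw [mul_assoc, Wu_eq hβ, hu, G_deriv hβ 0]
    rw [← mul_assoc, ← map_mul, show β * (α / (β - 1)) = dco β α 0 by
      rw [dco]; push_cast; simp only [zero_add]; field_simp; ring]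
    ring
  -- h1 : differentiated h2
  have h1 : PowerSeries.C β * (d⁄dX ℝ W * u + W * d⁄dX ℝ u)
      = d⁄dX ℝ u + PowerSeries.X * d⁄dX ℝ (d⁄dX ℝ u) := by
    have := congrArg (d⁄dX ℝ) h2
    simp only [Derivation.leibniz, smul_eq_mul, PowerSeries.derivative_C,
      PowerSeries.derivative_X, mul_zero, zero_mul, add_zero, zero_add, mul_one, one_mul] at this
    linear_combination this
  -- ODE for u
  have h3 : PowerSeries.X * d⁄dX ℝ (d⁄dX ℝ u) + d⁄dX ℝ u - PowerSeries.C β * d⁄dX ℝ u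
      + PowerSeries.C α * PowerSeries.C β * u = 0 := by
    have du : d⁄dX ℝ u = PowerSeries.C (dco β α 0) * G α β 1 := by
      rw [hu]; simpa using G_deriv hβ 0
    have ddu : d⁄dX ℝ (d⁄dX ℝ u)
        = PowerSeries.C (dco β α 0) * (PowerSeries.C (dco β α 1) * G α β 2) := by
      rw [du, Derivation.leibniz, smul_eq_mul, smul_eq_mul, PowerSeries.derivative_C]
      simpa using congrArg (fun z => PowerSeries.C (dco β α 0) * z) (G_deriv hβ 1)
    rw [ddu, du]
    have hcont := G_contig (α := α) hβ 0
    norm_num at hcont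
    rw [hu, hcont]
    have e1 : PowerSeries.C (dco β α 0) - PowerSeries.C β * PowerSeries.C (dco β α 0)
        + PowerSeries.C α * PowerSeries.C β = 0 := by
      rw [← map_mul, ← map_mul, ← map_sub, ← map_add, show dco β α 0 - β * dco β α 0 + α * β = 0
        by rw [dco]; push_cast; simp only [zero_add]; field_simp; ring, map_zero]
    have e2 : PowerSeries.C (dco β α 0) * PowerSeries.C (dco β α 1)
        + PowerSeries.C α * PowerSeries.C β * PowerSeries.C (aS α β 1) = 0 := by
      have hb2 : β - 2 ≠ 0 := beta_sub_ne hβ 2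
      rw [← map_mul, ← map_mul, ← map_mul, ← map_add, show dco β α 0 * dco β α 1
        + α * β * aS α β 1 = 0 by rw [dco, dco, aS]; push_cast; simp only [zero_add]; field_simp; ring, map_zero]
    linear_combination (G α β 1) * e1 + (PowerSeries.X * G α β 2) * e2
  -- main cancellation
  have hune : u ≠ 0 := G_ne_zero 0
  have huune : PowerSeries.C β * u ^ 2 ≠ 0 := by
    apply mul_ne_zero _ (pow_ne_zero _ hune)
    simpa using hb0
  have key : PowerSeries.C β * u ^ 2 * (PowerSeries.X * d⁄dX ℝ W - PowerSeries.C β * W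
      + PowerSeries.C β * W ^ 2 + PowerSeries.C α * PowerSeries.X) = 0 := by
    linear_combination (PowerSeries.X * u) * h1
      + (PowerSeries.C β * u * (W - 1)) * h2 + (PowerSeries.X * u) * h3
  exact mul_left_cancel₀ huune (key.trans (mul_zero _).symm)


/-- convolution sum trimming -/
lemma sum_trim (z : ℕ → ℝ) (hz0 : z 0 = 0) (k : ℕ) (hk : 1 ≤ k) :
    ∑ i ∈ Finset.range (k + 1), z i * z (k - i) = ∑ i ∈ Finset.Ico 1 k, z i * z (k - i) := by
  rw [Finset.range_eq_Ico, Finset.sum_Ico_succ_top (Nat.zero_le k),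
    Finset.sum_eq_sum_Ico_succ_bot (by omega : 0 < k)]
  simp [hz0]

lemma riccati_coeff (Z : PowerSeries ℝ)
    (h : PowerSeries.X * d⁄dX ℝ Z - PowerSeries.C β * Z
      + PowerSeries.C β * Z ^ 2 + PowerSeries.C α * PowerSeries.X = 0)
    (h0 : PowerSeries.coeff 0 Z = 0) :
    ∀ k : ℕ, 1 ≤ k →
      ((k : ℝ) - β) * PowerSeries.coeff k Z
        + β * (∑ i ∈ Finset.Ico 1 k, PowerSeries.coeff i Z * PowerSeries.coeff (k - i) Z)
        + (if k = 1 then α else 0) = 0 := by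
  intro k hk
  obtain ⟨j, rfl⟩ : ∃ j, k = j + 1 := ⟨k - 1, by omega⟩
  have hco := congrArg (PowerSeries.coeff (j + 1)) h
  rw [map_add, map_add, map_sub, sq, PowerSeries.coeff_C_mul, PowerSeries.coeff_C_mul,
    PowerSeries.coeff_C_mul, PowerSeries.coeff_succ_X_mul, PowerSeries.coeff_derivative,
    PowerSeries.coeff_mul, Finset.Nat.sum_antidiagonal_eq_sum_range_succ_mk, map_zero,
    PowerSeries.coeff_X] at hco
  simp only [Nat.succ_eq_add_one] at hco
  rw [sum_trim _ h0 (j + 1) (by omega)] at hco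
  push_cast at hco ⊢
  rw [show ((if j = 0 then α else 0) : ℝ) = α * (if j = 0 then (1:ℝ) else 0) by
    split <;> ring]
  linarith [hco]

/-- uniqueness of the solution of the recursion -/
lemma c_unique (hβ : ∀ k : ℤ, β ≠ (k : ℝ)) (c z : ℕ → ℝ) (hc0 : c 0 = 0) (hz0 : z 0 = 0)
    (hc : ∀ k : ℕ, 1 ≤ k →
      ((k : ℝ) - β) * c k + β * (∑ i ∈ Finset.Ico 1 k, c i * c (k - i))
        + (if k = 1 then α else 0) = 0)
    (hz : ∀ k : ℕ, 1 ≤ k →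
      ((k : ℝ) - β) * z k + β * (∑ i ∈ Finset.Ico 1 k, z i * z (k - i))
        + (if k = 1 then α else 0) = 0) :
    ∀ k, c k = z k := by
  intro k
  induction k using Nat.strong_induction_on with
  | _ k ih =>
    rcases Nat.eq_zero_or_pos k with rfl | hk
    · rw [hc0, hz0]
    · have h1 := hc k hk
      have h2 := hz k hk
      have hsum : ∑ i ∈ Finset.Ico 1 k, c i * c (k - i)
          = ∑ i ∈ Finset.Ico 1 k, z i * z (k - i) := by
        refine Finset.sum_congr rfl fun i hi => ?_
        rw [Finset.mem_Ico] at hi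
        rw [ih i (by omega), ih (k - i) (by omega)]
      have hkβ : (k : ℝ) - β ≠ 0 := by
        intro hh; exact hβ k (by push_cast; linarith)
      rw [hsum] at h1
      have heq : ((k : ℝ) - β) * c k = ((k : ℝ) - β) * z k := by linarith
      exact mul_left_cancel₀ hkβ heq

lemma beta_nat_ne (hβ : ∀ k : ℤ, β ≠ (k : ℝ)) (k : ℕ) : β - (k : ℝ) ≠ 0 := by
  have := beta_sub_ne hβ (k : ℤ); push_cast at this; exact this

lemma alphan_eq (hα : α ≠ 0) (hβ : ∀ k : ℤ, β ≠ (k : ℝ)) (m : ℕ) :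
    riccatiαn α β (m + 2) = -(aS α β (2 * m + 1) * aS α β (2 * m + 2)) := by
  have h1 := beta_nat_ne hβ (2 * m + 1)
  have h2 := beta_nat_ne hβ (2 * m + 2)
  have h3 := beta_nat_ne hβ (2 * m + 3)
  have e1 : ((2 * m + 1 : ℕ) : ℝ) - β ≠ 0 := fun h => h1 (by push_cast at h ⊢; linarith)
  have e2 : ((2 * m + 1 : ℕ) : ℝ) + 1 - β ≠ 0 := fun h => h2 (by push_cast at h ⊢; linarith)
  have e3 : ((2 * m + 2 : ℕ) : ℝ) - β ≠ 0 := fun h => h2 (by push_cast at h ⊢; linarith)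
  have e4 : ((2 * m + 2 : ℕ) : ℝ) + 1 - β ≠ 0 := fun h => h3 (by push_cast at h ⊢; linarith)
  have d1 : β - 2 * ((m : ℝ) + 2) + 1 ≠ 0 := fun h => h3 (by push_cast at h ⊢; linarith)
  have d2 : β - 2 * ((m : ℝ) + 2) + 2 ≠ 0 := fun h => h2 (by push_cast at h ⊢; linarith)
  have d3 : β - 2 * ((m : ℝ) + 2) + 3 ≠ 0 := fun h => h1 (by push_cast at h ⊢; linarith)
  rw [riccatiαn, aS, aS]
  push_cast at *
  rw [div_mul_div_comm, neg_mul_neg, ← neg_div, div_eq_div_iff (mul_ne_zero (mul_ne_zero d1 (pow_ne_zero 2 d2)) d3) (mul_ne_zero (mul_ne_zero e1 e2) (mul_ne_zero e3 e4))]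
  ring

lemma betan_eq (hα : α ≠ 0) (hβ : ∀ k : ℤ, β ≠ (k : ℝ)) (m : ℕ) :
    riccatiβn α β (m + 2) = aS α β (2 * m + 2) + aS α β (2 * m + 3) := by
  have h2 := beta_nat_ne hβ (2 * m + 2)
  have h3 := beta_nat_ne hβ (2 * m + 3)
  have h4 := beta_nat_ne hβ (2 * m + 4)
  have e1 : ((2 * m + 2 : ℕ) : ℝ) - β ≠ 0 := fun h => h2 (by push_cast at h ⊢; linarith)
  have e2 : ((2 * m + 2 : ℕ) : ℝ) + 1 - β ≠ 0 := fun h => h3 (by push_cast at h ⊢; linarith)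
  have e3 : ((2 * m + 3 : ℕ) : ℝ) - β ≠ 0 := fun h => h3 (by push_cast at h ⊢; linarith)
  have e4 : ((2 * m + 3 : ℕ) : ℝ) + 1 - β ≠ 0 := fun h => h4 (by push_cast at h ⊢; linarith)
  have d1 : β - 2 * ((m : ℝ) + 2) ≠ 0 := fun h => h4 (by push_cast at h ⊢; linarith)
  have d2 : β - 2 * ((m : ℝ) + 2) + 2 ≠ 0 := fun h => h2 (by push_cast at h ⊢; linarith)
  rw [riccatiβn, aS, aS]
  push_cast at *
  rw [div_add_div _ _ (mul_ne_zero e1 e2) (mul_ne_zero e3 e4), div_eq_div_iff (mul_ne_zero d1 d2) (mul_ne_zero (mul_ne_zero e1 e2) (mul_ne_zero e3 e4))]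
  ring

/-- the main error formula -/
lemma error_formula (hα : α ≠ 0) (hβ : ∀ k : ℤ, β ≠ (k : ℝ))
    (c : ℕ → ℝ) (F : PowerSeries ℝ) (hF : F = PowerSeries.mk c)
    (hstar : F * G α β 0 = PowerSeries.C (c 1) * (PowerSeries.X * G α β 1))
    (hc1 : c 1 = α / (β - 1))
    (hc2 : c 2 / c 1 = -(aS α β 1))
    (A B : ℕ → Polynomial ℝ)
    (hA0 : A 0 = 0) (hB0 : B 0 = 1)
    (hA1 : A 1 = Polynomial.C (c 1) * Polynomial.X)
    (hB1 : B 1 = 1 - Polynomial.C (c 2 / c 1) * Polynomial.X)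
    (hArec : ∀ n : ℕ, 2 ≤ n →
      A n = (1 + Polynomial.C (riccatiβn α β n) * Polynomial.X) * A (n - 1)
        + Polynomial.C (riccatiαn α β n) * Polynomial.X ^ 2 * A (n - 2))
    (hBrec : ∀ n : ℕ, 2 ≤ n →
      B n = (1 + Polynomial.C (riccatiβn α β n) * Polynomial.X) * B (n - 1)
        + Polynomial.C (riccatiαn α β n) * Polynomial.X ^ 2 * B (n - 2)) :
    ∀ m : ℕ, ((B m : PowerSeries ℝ) * F - (A m : PowerSeries ℝ)) * G α β 0
      = PowerSeries.C (sig α β m) * (PowerSeries.X ^ (2 * m + 1) * G α β (2 * m + 1)) := by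
  have hs0 : sig α β 0 = c 1 := by rw [sig, hc1]
  intro m
  induction m using Nat.strong_induction_on with
  | _ m ih =>
    match m with
    | 0 =>
      rw [hA0, hB0]
      push_cast
      rw [one_mul, sub_zero, hstar, hs0]
      ring
    | 1 =>
      rw [hA1, hB1]
      push_cast
      have cont0 := G_contig (α := α) hβ 0
      have cont1 := G_contig (α := α) hβ 1
      norm_num at cont0 cont1
      have hr : PowerSeries.C (c 2 / c 1) = -(PowerSeries.C (aS α β 1)) := by
        rw [hc2, map_neg]
      have hs1 : PowerSeries.C (sig α β 1)
          = PowerSeries.C (c 1) * PowerSeries.C (aS α β 1) * PowerSeries.C (aS α β 2) := by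
        rw [← map_mul, ← map_mul]
        congr 1
        have h : sig α β 1 = sig α β 0 * aS α β (2*0+1) * aS α β (2*0+2) := rfl
        norm_num at h
        rw [h, hs0]
      rw [hr, hs1]
      linear_combination (1 + PowerSeries.C (aS α β 1) * PowerSeries.X) * hstar
        + (-(PowerSeries.C (c 1)) * PowerSeries.X) * cont0
        + (PowerSeries.C (c 1) * PowerSeries.C (aS α β 1) * PowerSeries.X ^ 2) * cont1
    | (m + 2) =>
      have E1 := ih (m + 1) (by omega)
      have E0 := ih m (by omega)
      rw [hArec (m + 2) (by omega), hBrec (m + 2) (by omega)]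
      norm_num
      push_cast
      have cont1 : G α β (2*m+1) = G α β (2*m+2)
          + PowerSeries.C (aS α β (2*m+2)) * (PowerSeries.X * G α β (2*m+3)) := by
        have h := G_contig (α := α) hβ (2*m+1)
        rw [show 2*m+1+1 = 2*m+2 from by ring, show 2*m+1+2 = 2*m+3 from by ring] at h
        exact h
      have cont2 : G α β (2*m+2) = G α β (2*m+3)
          + PowerSeries.C (aS α β (2*m+3)) * (PowerSeries.X * G α β (2*m+4)) := by
        have h := G_contig (α := α) hβ (2*m+2)
        rw [show 2*m+2+1 = 2*m+3 from by ring, show 2*m+2+2 = 2*m+4 from by ring] at h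
        exact h
      have cont3 : G α β (2*m+3) = G α β (2*m+4)
          + PowerSeries.C (aS α β (2*m+4)) * (PowerSeries.X * G α β (2*m+5)) := by
        have h := G_contig (α := α) hβ (2*m+3)
        rw [show 2*m+3+1 = 2*m+4 from by ring, show 2*m+3+2 = 2*m+5 from by ring] at h
        exact h
      have hα' : PowerSeries.C (riccatiαn α β (m+2))
          = -(PowerSeries.C (aS α β (2*m+1)) * PowerSeries.C (aS α β (2*m+2))) := by
        rw [alphan_eq hα hβ m, map_neg, map_mul]
      have hβ' : PowerSeries.C (riccatiβn α β (m+2))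
          = PowerSeries.C (aS α β (2*m+2)) + PowerSeries.C (aS α β (2*m+3)) := by
        rw [betan_eq hα hβ m, map_add]
      have hsig1 : PowerSeries.C (sig α β (m+1)) = PowerSeries.C (sig α β m)
          * PowerSeries.C (aS α β (2*m+1)) * PowerSeries.C (aS α β (2*m+2)) := by
        rw [← map_mul, ← map_mul]; rfl
      have hsig2 : PowerSeries.C (sig α β (m+2)) = PowerSeries.C (sig α β (m+1))
          * PowerSeries.C (aS α β (2*m+3)) * PowerSeries.C (aS α β (2*m+4)) := by
        have h : sig α β (m+2) = sig α β (m+1) * aS α β (2*(m+1)+1) * aS α β (2*(m+1)+2) := rfl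
        rw [show 2*(m+1)+1 = 2*m+3 from by ring, show 2*(m+1)+2 = 2*m+4 from by ring] at h
        rw [← map_mul, ← map_mul, h]
      rw [show 2*(m+1)+1 = 2*m+3 from by ring] at E1
      rw [hsig1] at E1
      rw [show 2*(m+2)+1 = 2*m+5 from by ring, hsig2, hsig1, hα', hβ']
      linear_combination
        (1 + (PowerSeries.C (aS α β (2*m+2)) + PowerSeries.C (aS α β (2*m+3)))
            * PowerSeries.X) * E1
        + (-(PowerSeries.C (aS α β (2*m+1)) * PowerSeries.C (aS α β (2*m+2)))
            * PowerSeries.X ^ 2) * E0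
        + (-(PowerSeries.C (aS α β (2*m+1)) * PowerSeries.C (aS α β (2*m+2)))
            * PowerSeries.C (sig α β m) * PowerSeries.X ^ (2*m+3)) * cont1
        + (-(PowerSeries.C (aS α β (2*m+1)) * PowerSeries.C (aS α β (2*m+2)))
            * PowerSeries.C (sig α β m) * PowerSeries.X ^ (2*m+3)) * cont2
        + (PowerSeries.C (sig α β m) * PowerSeries.C (aS α β (2*m+1))
            * PowerSeries.C (aS α β (2*m+2)) * PowerSeries.C (aS α β (2*m+3))
            * PowerSeries.X ^ (2*m+4)) * cont3


lemma isUnit_G0 : IsUnit (G α β 0) := by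
  apply IsUnit.of_mul_eq_one ((G α β 0)⁻¹)
  exact PowerSeries.mul_inv_cancel _ (by rw [constantCoeff_G]; norm_num)

lemma coeff_vanish (Z : PowerSeries ℝ) (s : ℝ) (N : ℕ) (H : PowerSeries ℝ)
    (h : Z * G α β 0 = PowerSeries.C s * (PowerSeries.X ^ N * H)) :
    ∀ j < N, PowerSeries.coeff j Z = 0 := by
  intro j hj
  have hdvd : (PowerSeries.X : PowerSeries ℝ) ^ N ∣ Z * G α β 0 :=
    ⟨PowerSeries.C s * H, by rw [h]; ring⟩
  have hdvd2 : (PowerSeries.X : PowerSeries ℝ) ^ N ∣ Z :=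
    (IsUnit.dvd_mul_right isUnit_G0).mp hdvd
  exact PowerSeries.X_pow_dvd_iff.mp hdvd2 j hj

lemma seriesTrunc_coeff (c : ℕ → ℝ) (N j : ℕ) (hj : j ≤ N) :
    (seriesTrunc c N).coeff j = c j := by
  rw [seriesTrunc, Polynomial.finset_sum_coeff]
  rw [Finset.sum_eq_single j (fun k _ hk => by
      rw [Polynomial.coeff_C_mul, Polynomial.coeff_X_pow, if_neg (fun hh => hk hh.symm),
        mul_zero])
    (fun hmem => absurd (Finset.mem_range.2 (by omega)) hmem)]
  rw [Polynomial.coeff_C_mul, Polynomial.coeff_X_pow, if_pos rfl, mul_one]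

/-- degree and constant coefficient bounds -/
lemma deg_bound (P : ℕ → Polynomial ℝ) (b a : ℕ → ℝ)
    (h0 : (P 0).natDegree ≤ 0) (h1 : (P 1).natDegree ≤ 1)
    (hrec : ∀ n : ℕ, 2 ≤ n →
      P n = (1 + Polynomial.C (b n) * Polynomial.X) * P (n - 1)
        + Polynomial.C (a n) * Polynomial.X ^ 2 * P (n - 2)) :
    ∀ m, (P m).natDegree ≤ m := by
  intro m
  induction m using Nat.strong_induction_on with
  | _ m ih =>
    match m with
    | 0 => exact h0
    | 1 => exact h1
    | (m + 2) =>
      rw [hrec (m + 2) (by omega)]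
      norm_num
      apply (Polynomial.natDegree_add_le _ _).trans
      apply max_le
      · apply (Polynomial.natDegree_mul_le).trans
        have hb : (1 + Polynomial.C (b (m+2)) * Polynomial.X).natDegree ≤ 1 := by
          apply (Polynomial.natDegree_add_le _ _).trans
          apply max_le (by simp)
          exact (Polynomial.natDegree_C_mul_le _ _).trans Polynomial.natDegree_X_le
        have := ih (m + 1) (by omega)
        omega
      · apply (Polynomial.natDegree_mul_le).trans
        have hb : (Polynomial.C (a (m+2)) * Polynomial.X ^ 2).natDegree ≤ 2 := by
          apply (Polynomial.natDegree_C_mul_le _ _).trans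
          simpa using Polynomial.natDegree_X_pow_le (R := ℝ) 2
        have := ih m (by omega)
        omega

lemma coeff0_A (P : ℕ → Polynomial ℝ) (b a : ℕ → ℝ) (v : ℝ)
    (h0 : (P 0).coeff 0 = v) (h1 : (P 1).coeff 0 = v)
    (hrec : ∀ n : ℕ, 2 ≤ n →
      P n = (1 + Polynomial.C (b n) * Polynomial.X) * P (n - 1)
        + Polynomial.C (a n) * Polynomial.X ^ 2 * P (n - 2)) :
    ∀ m, (P m).coeff 0 = v := by
  intro m
  induction m using Nat.strong_induction_on with
  | _ m ih =>
    match m with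
    | 0 => exact h0
    | 1 => exact h1
    | (m + 2) =>
      rw [hrec (m + 2) (by omega)]
      norm_num [Polynomial.mul_coeff_zero]
      exact ih (m + 1) (by omega)


end RiccatiProof

/-- **Explicit Jacobi parameters for the Riccati equation (the paper's Algorithm 2)**:
with `c` the Taylor coefficients of the Riccati solution, the polynomials generated by
the Jacobi recursion with the explicit parameters `α_n`, `β_n` form `[n/n]` Padé pairs
for every `n ≥ 1`. -/
theorem riccati_jacobi_algorithm (α β : ℝ) (hα : α ≠ 0) (hβ : ∀ k : ℤ, β ≠ (k : ℝ))
    (c : ℕ → ℝ) (hc0 : c 0 = 0)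
    (hc : ∀ k : ℕ, 1 ≤ k →
      ((k : ℝ) - β) * c k + β * (∑ i ∈ Finset.Ico 1 k, c i * c (k - i))
        + (if k = 1 then α else 0) = 0)
    (A B : ℕ → Polynomial ℝ)
    (hA0 : A 0 = 0) (hB0 : B 0 = 1)
    (hA1 : A 1 = Polynomial.C (c 1) * Polynomial.X)
    (hB1 : B 1 = 1 - Polynomial.C (c 2 / c 1) * Polynomial.X)
    (hArec : ∀ n : ℕ, 2 ≤ n →
      A n = (1 + Polynomial.C (riccatiβn α β n) * Polynomial.X) * A (n - 1)
        + Polynomial.C (riccatiαn α β n) * Polynomial.X ^ 2 * A (n - 2))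
    (hBrec : ∀ n : ℕ, 2 ≤ n →
      B n = (1 + Polynomial.C (riccatiβn α β n) * Polynomial.X) * B (n - 1)
        + Polynomial.C (riccatiαn α β n) * Polynomial.X ^ 2 * B (n - 2)) :
    ∀ n : ℕ, 1 ≤ n → IsPadePair c n (A n) (B n) := by
  classical
  -- basic scalar consequences of the recursion
  have hb1 : β - 1 ≠ 0 := by
    have := RiccatiProof.beta_nat_ne hβ 1; push_cast at this; exact this
  have hb2 : β - 2 ≠ 0 := by
    have := RiccatiProof.beta_nat_ne hβ 2; push_cast at this; exact this
  have hc1 : c 1 = α / (β - 1) := by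
    have h := hc 1 le_rfl
    simp only [Finset.Ico_self, Finset.sum_empty, mul_zero, add_zero, if_pos rfl, if_true,
      Nat.cast_one] at h
    rw [eq_div_iff hb1]
    linear_combination -h
  have hc1ne : c 1 ≠ 0 := by rw [hc1]; exact div_ne_zero hα hb1
  have hc2v : c 2 = β * c 1 ^ 2 / (β - 2) := by
    have h := hc 2 (by omega)
    have hico : Finset.Ico 1 2 = {1} := rfl
    simp only [hico, Finset.sum_singleton, Nat.cast_ofNat, if_neg (by norm_num : ¬(2 = 1)),
      add_zero] at h
    rw [eq_div_iff hb2]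
    norm_num at h
    linear_combination -h
  have hc2 : c 2 / c 1 = -(RiccatiProof.aS α β 1) := by
    have h1b : (1 : ℝ) - β ≠ 0 := fun h => hb1 (by linarith)
    have h2b : (2 : ℝ) - β ≠ 0 := fun h => hb2 (by linarith)
    have ha : RiccatiProof.aS α β 1 = -(α * β) / ((1 - β) * (2 - β)) := by
      rw [RiccatiProof.aS]; norm_num
    rw [div_eq_iff hc1ne, ha, hc2v, hc1]
    field_simp
    ring
  -- the power series identity
  have hW0 : PowerSeries.coeff 0 (RiccatiProof.Wser α β) = 0 := by
    simp only [RiccatiProof.Wser, PowerSeries.coeff_zero_eq_constantCoeff, map_mul,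
      PowerSeries.constantCoeff_C, PowerSeries.constantCoeff_X, zero_mul, mul_zero]
  have hWrec := RiccatiProof.riccati_coeff (α := α) (β := β) (RiccatiProof.Wser α β)
    (RiccatiProof.W_riccati hβ) hW0
  have hck : ∀ k, c k = PowerSeries.coeff k (RiccatiProof.Wser α β) :=
    RiccatiProof.c_unique hβ c _ hc0 hW0 hc hWrec
  have hF : PowerSeries.mk c = RiccatiProof.Wser α β :=
    PowerSeries.ext fun k => by rw [PowerSeries.coeff_mk]; exact hck k
  have hstar : PowerSeries.mk c * RiccatiProof.G α β 0
      = PowerSeries.C (c 1) * (PowerSeries.X * RiccatiProof.G α β 1) := by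
    rw [hF, RiccatiProof.Wu_eq hβ, hc1]
  have herr := RiccatiProof.error_formula hα hβ c (PowerSeries.mk c) rfl hstar hc1 hc2
    A B hA0 hB0 hA1 hB1 hArec hBrec
  -- assemble the Padé pair conditions
  intro n _hn
  refine ⟨?_, ?_, ?_, ?_, ?_⟩
  · exact RiccatiProof.deg_bound A (riccatiβn α β) (riccatiαn α β)
      (by rw [hA0]; simp)
      (by rw [hA1]; exact (Polynomial.natDegree_C_mul_le _ _).trans Polynomial.natDegree_X_le)
      hArec n
  · have hB1deg : (B 1).natDegree ≤ 1 := by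
      rw [hB1]
      apply (Polynomial.natDegree_sub_le _ _).trans
      apply max_le (by simp)
      exact (Polynomial.natDegree_C_mul_le _ _).trans Polynomial.natDegree_X_le
    exact RiccatiProof.deg_bound B (riccatiβn α β) (riccatiαn α β)
      (by rw [hB0]; simp) hB1deg hBrec n
  · exact RiccatiProof.coeff0_A A (riccatiβn α β) (riccatiαn α β) 0
      (by rw [hA0]; simp) (by rw [hA1]; simp) hArec n
  · exact RiccatiProof.coeff0_A B (riccatiβn α β) (riccatiαn α β) 1
      (by rw [hB0]; simp) (by rw [hB1]; simp) hBrec n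
  · intro j hj
    have hZ := RiccatiProof.coeff_vanish ((B n : PowerSeries ℝ) * PowerSeries.mk c
        - (A n : PowerSeries ℝ)) (RiccatiProof.sig α β n) (2 * n + 1)
        (RiccatiProof.G α β (2 * n + 1)) (herr n) j (by omega)
    have h2 : PowerSeries.coeff j ((B n : PowerSeries ℝ)
        * ((seriesTrunc c (2 * n) : PowerSeries ℝ) - PowerSeries.mk c)) = 0 := by
      rw [PowerSeries.coeff_mul]
      apply Finset.sum_eq_zero
      intro p hp
      rw [Finset.HasAntidiagonal.mem_antidiagonal] at hp
      have hp2 : p.2 ≤ 2 * n := by omega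
      simp only [map_sub, Polynomial.coeff_coe, PowerSeries.coeff_mk]
      rw [RiccatiProof.seriesTrunc_coeff c _ _ hp2, sub_self, mul_zero]
    have key : (A n - B n * seriesTrunc c (2 * n)).coeff j
        = PowerSeries.coeff j ((A n : PowerSeries ℝ)
          - (B n : PowerSeries ℝ) * (seriesTrunc c (2 * n) : PowerSeries ℝ)) := by
      rw [← Polynomial.coeff_coe]
      norm_cast
    rw [key, show (A n : PowerSeries ℝ)
        - (B n : PowerSeries ℝ) * (seriesTrunc c (2 * n) : PowerSeries ℝ)
        = -(((B n : PowerSeries ℝ) * PowerSeries.mk c - (A n : PowerSeries ℝ)))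
          - (B n : PowerSeries ℝ) * ((seriesTrunc c (2 * n) : PowerSeries ℝ)
            - PowerSeries.mk c) from by ring, map_sub, map_neg, hZ, h2]
    simp
end
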